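/- Let β = 6^{−2/3} and define the Tietz potential Φ^T(r) = 1/(r(1+βr)²) for r > 0. Then for every λ ≥ 0, (1/π) ∫₀^∞ (Φ^T(r) − λ²r⁻²)₊^{1/2} dr = max{6^{1/3} − 2λ, 0}. That is, replacing the Thomas–Fermi potential by the Tietz potential in the definition of κ yields exactly the Madelung distribution κ^Madelung. -/

import Mathlib

open MeasureTheory Real Set

open Filter Topology

lemma aux_sq {X D Y : ℝ} (hD : D ≠ 0) (h : D^2 - X^2 = Y^2) : 1 - (X/D)^2 = (Y/D)^2 := by
  field_simp
  linarith

lemma key_integral (a b c : ℝ) (ha : 0 < a) (hab : a < b) (hc : 0 < c) :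
    ∫ r in a..b, Real.sqrt ((r - a) * (b - r)) * (1/r - 1/(r+c))
      = π * (Real.sqrt ((a+c)*(b+c)) - Real.sqrt (a*b) - c) := by
  have hb : 0 < b := ha.trans hab
  have hd0 : (0:ℝ) < b - a := sub_pos.2 hab
  set s : ℝ := Real.sqrt (a*b) with hs
  set K : ℝ := Real.sqrt ((a+c)*(b+c)) with hK
  have hs0 : 0 < s := Real.sqrt_pos.2 (by positivity)
  have hK0 : 0 < K := Real.sqrt_pos.2 (by positivity)
  have hs2 : s^2 = a*b := Real.sq_sqrt (by positivity)
  have hK2 : K^2 = (a+c)*(b+c) := Real.sq_sqrt (by positivity)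
  set F : ℝ → ℝ := fun r => -c * Real.arcsin ((2*r - a - b)/(b-a))
      - s * Real.arcsin (((a+b)*r - 2*(a*b))/((b-a)*r))
      + K * Real.arcsin (((a+b+2*c)*(r+c) - 2*((a+c)*(b+c)))/((b-a)*(r+c))) with hF
  have hFa : F a = -(π/2) * (-c - s + K) := by
    have e1 : (2*a - a - b)/(b-a) = -1 := by
      rw [div_eq_iff (ne_of_gt hd0)]; ring
    have e2 : ((a+b)*a - 2*(a*b))/((b-a)*a) = -1 := by
      rw [div_eq_iff (ne_of_gt (mul_pos hd0 ha))]; ring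
    have e3 : ((a+b+2*c)*(a+c) - 2*((a+c)*(b+c)))/((b-a)*(a+c)) = -1 := by
      rw [div_eq_iff (ne_of_gt (mul_pos hd0 (by positivity)))]; ring
    rw [hF]; simp only [e1, e2, e3, Real.arcsin_neg_one]; ring
  have hFb : F b = (π/2) * (-c - s + K) := by
    have e1 : (2*b - a - b)/(b-a) = 1 := by
      rw [div_eq_iff (ne_of_gt hd0)]; ring
    have e2 : ((a+b)*b - 2*(a*b))/((b-a)*b) = 1 := by
      rw [div_eq_iff (ne_of_gt (mul_pos hd0 hb))]; ring
    have e3 : ((a+b+2*c)*(b+c) - 2*((a+c)*(b+c)))/((b-a)*(b+c)) = 1 := by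
      rw [div_eq_iff (ne_of_gt (mul_pos hd0 (by positivity)))]; ring
    rw [hF]; simp only [e1, e2, e3, Real.arcsin_one]; ring
  have hFderiv : ∀ r ∈ Ioo a b,
      HasDerivAt F (Real.sqrt ((r - a) * (b - r)) * (1/r - 1/(r+c))) r := by
    intro r hr
    have hr0 : 0 < r := ha.trans hr.1
    have hrc : 0 < r + c := by positivity
    have hW : 0 < (r - a) * (b - r) := mul_pos (sub_pos.2 hr.1) (sub_pos.2 hr.2)
    set t : ℝ := Real.sqrt ((r - a) * (b - r)) with ht
    have ht0 : 0 < t := Real.sqrt_pos.2 hW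
    have ht2 : t^2 = (r - a) * (b - r) := Real.sq_sqrt hW.le
    -- inner rational functions and their derivatives
    have hv : HasDerivAt (fun x : ℝ => (2*x - a - b)/(b-a)) (2/(b-a)) r := by
      simpa using (((hasDerivAt_id r).const_mul 2).sub_const a |>.sub_const b).div_const (b-a)
    have hu : HasDerivAt (fun x : ℝ => ((a+b)*x - 2*(a*b))/((b-a)*x))
        (2*(a*b)/((b-a)*r^2)) r := by
      have h1 : HasDerivAt (fun x : ℝ => (a+b)*x - 2*(a*b)) (a+b) r := by
        simpa using ((hasDerivAt_id r).const_mul (a+b)).sub_const (2*(a*b))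
      have h2 : HasDerivAt (fun x : ℝ => (b-a)*x) (b-a) r := by
        simpa using (hasDerivAt_id r).const_mul (b-a)
      have h3 := h1.div h2 (ne_of_gt (mul_pos hd0 hr0))
      refine h3.congr_deriv ?_
      rw [div_eq_div_iff (pow_pos (mul_pos hd0 hr0) 2).ne' (mul_pos hd0 (pow_pos hr0 2)).ne']; ring
    have hw : HasDerivAt (fun x : ℝ => ((a+b+2*c)*(x+c) - 2*((a+c)*(b+c)))/((b-a)*(x+c)))
        (2*((a+c)*(b+c))/((b-a)*(r+c)^2)) r := by
      have h1 : HasDerivAt (fun x : ℝ => (a+b+2*c)*(x+c) - 2*((a+c)*(b+c))) (a+b+2*c) r := by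
        simpa using (((hasDerivAt_id r).add_const c).const_mul (a+b+2*c)).sub_const
          (2*((a+c)*(b+c)))
      have h2 : HasDerivAt (fun x : ℝ => (b-a)*(x+c)) (b-a) r := by
        simpa using ((hasDerivAt_id r).add_const c).const_mul (b-a)
      have h3 := h1.div h2 (ne_of_gt (mul_pos hd0 hrc))
      refine h3.congr_deriv ?_
      rw [div_eq_div_iff (pow_pos (mul_pos hd0 hrc) 2).ne' (mul_pos hd0 (pow_pos hrc 2)).ne']; ring
    -- the sqrt simplifications
    have hv2 : 1 - ((2*r - a - b)/(b-a))^2 = (2*t/(b-a))^2 :=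
      aux_sq (ne_of_gt hd0) (by linear_combination (-4:ℝ) * ht2)
    have hu2 : 1 - (((a+b)*r - 2*(a*b))/((b-a)*r))^2 = (2*s*t/((b-a)*r))^2 :=
      aux_sq (ne_of_gt (mul_pos hd0 hr0))
        (by linear_combination (-4*(a*b)) * ht2 + (-4*t^2) * hs2)
    have hw2 : 1 - (((a+b+2*c)*(r+c) - 2*((a+c)*(b+c)))/((b-a)*(r+c)))^2
        = (2*K*t/((b-a)*(r+c)))^2 :=
      aux_sq (ne_of_gt (mul_pos hd0 hrc))
        (by linear_combination (-4*((a+c)*(b+c))) * ht2 + (-4*t^2) * hK2)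
    have sqv : Real.sqrt (1 - ((2*r - a - b)/(b-a))^2) = 2*t/(b-a) := by
      rw [hv2, Real.sqrt_sq (by positivity)]
    have squ : Real.sqrt (1 - (((a+b)*r - 2*(a*b))/((b-a)*r))^2) = 2*s*t/((b-a)*r) := by
      rw [hu2, Real.sqrt_sq (by positivity)]
    have sqw : Real.sqrt (1 - (((a+b+2*c)*(r+c) - 2*((a+c)*(b+c)))/((b-a)*(r+c)))^2)
        = 2*K*t/((b-a)*(r+c)) := by
      rw [hw2, Real.sqrt_sq (by positivity)]
    -- bounds: each arcsin argument is strictly inside (-1, 1)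
    have hb1 : ∀ x : ℝ, 1 - x^2 > 0 → x ≠ 1 ∧ x ≠ -1 := by
      intro x h
      constructor <;> rintro rfl <;> norm_num at h
    have hv1 := hb1 _ (by rw [hv2]; positivity)
    have hu1 := hb1 _ (by rw [hu2]; positivity)
    have hw1 := hb1 _ (by rw [hw2]; positivity)
    -- arcsin derivatives
    have A1 : HasDerivAt (fun x : ℝ => Real.arcsin ((2*x - a - b)/(b-a)))
        ((1 / Real.sqrt (1 - ((2*r - a - b)/(b-a))^2)) * (2/(b-a))) r :=
      by have h := (Real.hasDerivAt_arcsin hv1.2 hv1.1).comp r hv; exact h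
    have A2 : HasDerivAt (fun x : ℝ => Real.arcsin (((a+b)*x - 2*(a*b))/((b-a)*x)))
        ((1 / Real.sqrt (1 - (((a+b)*r - 2*(a*b))/((b-a)*r))^2)) * (2*(a*b)/((b-a)*r^2))) r :=
      by have h := (Real.hasDerivAt_arcsin hu1.2 hu1.1).comp r hu; exact h
    have A3 : HasDerivAt (fun x : ℝ =>
          Real.arcsin (((a+b+2*c)*(x+c) - 2*((a+c)*(b+c)))/((b-a)*(x+c))))
        ((1 / Real.sqrt (1 - (((a+b+2*c)*(r+c) - 2*((a+c)*(b+c)))/((b-a)*(r+c)))^2))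
          * (2*((a+c)*(b+c))/((b-a)*(r+c)^2))) r :=
      by have h := (Real.hasDerivAt_arcsin hw1.2 hw1.1).comp r hw; exact h
    have Atot := ((A1.const_mul (-c)).sub (A2.const_mul s)).add (A3.const_mul K)
    rw [sqv, squ, sqw] at Atot
    have e1 : -c * (1/(2*t/(b-a)) * (2/(b-a))) = -(c/t) := by
      field_simp
    have e2 : s * (1/(2*s*t/((b-a)*r)) * (2*(a*b)/((b-a)*r^2))) = (a*b)/(r*t) := by
      field_simp
    have e3 : K * (1/(2*K*t/((b-a)*(r+c))) * (2*((a+c)*(b+c))/((b-a)*(r+c)^2)))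
        = ((a+c)*(b+c))/((r+c)*t) := by
      field_simp
    rw [e1, e2, e3] at Atot
    refine Atot.congr_deriv ?_; symm
    refine mul_left_cancel₀ (ne_of_gt ht0) ?_
    rw [← mul_assoc, ← sq, ht2]
    field_simp
    ring
  have hc1 : ContinuousOn (fun r : ℝ => (2*r - a - b)/(b-a)) (Icc a b) := by
    apply ContinuousOn.div_const
    fun_prop
  have hc2 : ContinuousOn (fun r : ℝ => ((a+b)*r - 2*(a*b))/((b-a)*r)) (Icc a b) := by
    apply ContinuousOn.div (by fun_prop) (by fun_prop)
    exact fun x hx => ne_of_gt (mul_pos hd0 (ha.trans_le hx.1))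
  have hc3 : ContinuousOn
      (fun r : ℝ => ((a+b+2*c)*(r+c) - 2*((a+c)*(b+c)))/((b-a)*(r+c))) (Icc a b) := by
    apply ContinuousOn.div (by fun_prop) (by fun_prop)
    intro x hx
    have hx0 : 0 < x := ha.trans_le hx.1
    exact ne_of_gt (mul_pos hd0 (by positivity))
  have hcont : ContinuousOn F (Icc a b) := by
    rw [hF]
    exact ((continuousOn_const.mul (Real.continuous_arcsin.comp_continuousOn hc1)).sub
      (continuousOn_const.mul (Real.continuous_arcsin.comp_continuousOn hc2))).add
      (continuousOn_const.mul (Real.continuous_arcsin.comp_continuousOn hc3))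
  have hint : IntervalIntegrable (fun r => Real.sqrt ((r - a) * (b - r)) * (1/r - 1/(r+c)))
      volume a b := by
    apply ContinuousOn.intervalIntegrable_of_Icc hab.le
    apply ContinuousOn.mul
    · exact Real.continuous_sqrt.comp_continuousOn (by fun_prop)
    · apply ContinuousOn.sub
      · exact continuousOn_const.div (by fun_prop) (fun x hx => ne_of_gt (ha.trans_le hx.1))
      · refine continuousOn_const.div (by fun_prop) (fun x hx => ?_)
        have hx0 : 0 < x := ha.trans_le hx.1
        positivity
  rw [intervalIntegral.integral_eq_sub_of_hasDeriv_right_of_le hab.le hcont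
    (fun x hx => (hFderiv x hx).hasDerivWithinAt) hint, hFb, hFa]
  ring

set_option maxHeartbeats 1000000 in
/-- With `β = 6^{−2/3}` and Tietz potential `Φ^T(r) = 1/(r(1+βr)²)`, the
angular momentum distribution built from `Φ^T` equals the Madelung distribution:
`(1/π) ∫₀^∞ (Φ^T(r) − λ²r⁻²)₊^{1/2} dr = max{6^{1/3} − 2λ, 0}` for every `λ ≥ 0`. -/
theorem tietz_gives_madelung (lam : ℝ) (hlam : 0 ≤ lam) :
    (1 / π) * ∫ r in Ioi (0:ℝ),
        (max (1 / (r * (1 + (6:ℝ) ^ (-(2:ℝ)/3) * r) ^ 2) - lam ^ 2 / r ^ 2) 0) ^ ((1:ℝ)/2)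
      = max ((6:ℝ) ^ ((1:ℝ)/3) - 2 * lam) 0 := by
  set B : ℝ := (6:ℝ) ^ (-(2:ℝ)/3) with hBdef
  set c : ℝ := (6:ℝ) ^ ((2:ℝ)/3) with hcdef
  set s13 : ℝ := (6:ℝ) ^ ((1:ℝ)/3) with hs13def
  have hB : 0 < B := Real.rpow_pos_of_pos (by norm_num) _
  have hcpos : 0 < c := Real.rpow_pos_of_pos (by norm_num) _
  have hs13pos : 0 < s13 := Real.rpow_pos_of_pos (by norm_num) _
  have hBc : B * c = 1 := by
    rw [hBdef, hcdef, ← Real.rpow_add (by norm_num)]; norm_num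
  have hsqrtc : Real.sqrt c = s13 := by
    rw [hcdef, hs13def, Real.sqrt_eq_rpow, ← Real.rpow_mul (by norm_num)]; norm_num
  have hsq13 : s13^2 = c := by
    rw [sq, hs13def, hcdef, ← Real.rpow_add (by norm_num)]; norm_num
  by_cases hcase : s13 ≤ 2*lam
  · -- zero case: potential everywhere below the centrifugal term
    have hlam2 : c ≤ 4*lam^2 := by nlinarith [hsq13]
    have hzero : EqOn (fun r : ℝ => (max (1 / (r * (1 + B * r) ^ 2) - lam ^ 2 / r ^ 2) 0)
        ^ ((1:ℝ)/2)) (fun _ => (0:ℝ)) (Ioi 0) := by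
      intro r hr
      have hr0 : 0 < r := hr
      have hle : 1/(r*(1+B*r)^2) - lam^2/r^2 ≤ 0 := by
        rw [sub_nonpos, div_le_div_iff₀ (by positivity) (by positivity)]
        nlinarith [mul_le_mul_of_nonneg_left hlam2 hB.le,
          mul_nonneg (mul_nonneg (sq_nonneg lam) hr0.le) (sq_nonneg (1 - B*r)), sq_nonneg r]
      simp only [max_eq_right hle]
      exact Real.zero_rpow (by norm_num)
    rw [setIntegral_congr_fun measurableSet_Ioi hzero]
    simp only [integral_zero, mul_zero]
    exact (max_eq_right (by linarith)).symm
  push_neg at hcase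
  rcases hlam.eq_or_lt with h0 | hlam0
  · -- lam = 0 : explicit arctan antiderivative
    subst h0
    set sb : ℝ := (6:ℝ)^(-(1:ℝ)/3) with hsbdef
    have hsb0 : 0 < sb := Real.rpow_pos_of_pos (by norm_num) _
    have hsb13 : sb * s13 = 1 := by
      rw [hsbdef, hs13def, ← Real.rpow_add (by norm_num)]; norm_num
    have hsb2 : sb^2 = B := by
      rw [sq, hsbdef, hBdef, ← Real.rpow_add (by norm_num)]
      rw [show (-(1:ℝ)/3 + -(1:ℝ)/3) = -(2:ℝ)/3 by ring]
    have hfx : ∀ x : ℝ, 0 < x →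
        (max (1 / (x * (1 + B * x) ^ 2) - (0:ℝ) ^ 2 / x ^ 2) 0) ^ ((1:ℝ)/2)
          = 1/(Real.sqrt x * (1+B*x)) := by
      intro x hx0
      have h1 : (0:ℝ)^2/x^2 = 0 := by norm_num
      have h2 : 1/(x*(1+B*x)^2) = (1/(Real.sqrt x*(1+B*x)))^2 := by
        rw [div_pow, one_pow, mul_pow, Real.sq_sqrt hx0.le]
      rw [h1, sub_zero, h2, max_eq_left (sq_nonneg _), ← Real.sqrt_eq_rpow,
        Real.sqrt_sq (by positivity)]
    have hderiv : ∀ x ∈ Ioi (0:ℝ), HasDerivAt (fun r : ℝ => 2*s13 * Real.arctan (sb * Real.sqrt r))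
        ((max (1 / (x * (1 + B * x) ^ 2) - (0:ℝ) ^ 2 / x ^ 2) 0) ^ ((1:ℝ)/2)) x := by
      intro x hx
      have hx0 : 0 < x := hx
      have hsx : 0 < Real.sqrt x := Real.sqrt_pos.2 hx0
      have h1 : HasDerivAt (fun r : ℝ => sb * Real.sqrt r) (sb * (1/(2*Real.sqrt x))) x :=
        (Real.hasDerivAt_sqrt (ne_of_gt hx0)).const_mul sb
      have h2 := (Real.hasDerivAt_arctan (sb * Real.sqrt x)).comp x h1
      have h3 := h2.const_mul (2*s13)
      have hval : (max (1 / (x * (1 + B * x) ^ 2) - (0:ℝ) ^ 2 / x ^ 2) 0) ^ ((1:ℝ)/2)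
          = 2*s13 * ((1/(1+(sb*Real.sqrt x)^2)) * (sb * (1/(2*Real.sqrt x)))) := by
        rw [hfx x hx0, mul_pow, Real.sq_sqrt hx0.le, hsb2]
        have h1Bx : 0 < 1 + B*x := by positivity
        field_simp
        linear_combination (-1:ℝ) * hsb13
      rw [hval]
      exact h3
    have hpos : ∀ x ∈ Ioi (0:ℝ),
        0 ≤ (max (1 / (x * (1 + B * x) ^ 2) - (0:ℝ) ^ 2 / x ^ 2) 0) ^ ((1:ℝ)/2) :=
      fun x _ => Real.rpow_nonneg (le_max_right _ _) _
    have hcont : ContinuousWithinAt (fun r : ℝ => 2*s13 * Real.arctan (sb * Real.sqrt r))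
        (Ici 0) 0 := by
      apply Continuous.continuousWithinAt
      exact continuous_const.mul (Real.continuous_arctan.comp
        (continuous_const.mul Real.continuous_sqrt))
    have htend : Tendsto (fun r : ℝ => 2*s13 * Real.arctan (sb * Real.sqrt r)) atTop
        (𝓝 (2*s13*(π/2))) := by
      have hsq : Tendsto Real.sqrt atTop atTop :=
        (tendsto_rpow_atTop (by norm_num : (0:ℝ) < 1/2)).congr
          fun x => (Real.sqrt_eq_rpow x).symm
      have h1 : Tendsto (fun r : ℝ => sb * Real.sqrt r) atTop atTop :=
        hsq.const_mul_atTop hsb0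
      have h2 : Tendsto (fun r : ℝ => Real.arctan (sb*Real.sqrt r)) atTop (𝓝 (π/2)) :=
        (Real.tendsto_arctan_atTop.mono_right nhdsWithin_le_nhds).comp h1
      exact h2.const_mul (2*s13)
    rw [integral_Ioi_of_hasDerivAt_of_nonneg hcont hderiv hpos htend]
    rw [Real.sqrt_zero, mul_zero, Real.arctan_zero, mul_zero, sub_zero,
      max_eq_left (by linarith)]
    field_simp
    ring
  · -- main case : 0 < lam, 2 lam < s13
    have hlc : 4*lam^2 < c := by nlinarith
    have hD : 0 < 1 - 4*B*lam^2 := by nlinarith [mul_lt_mul_of_pos_left hlc hB]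
    set sD : ℝ := Real.sqrt (1 - 4*B*lam^2) with hsDdef
    have hsD0 : 0 < sD := Real.sqrt_pos.2 hD
    have hsD2 : sD^2 = 1 - 4*B*lam^2 := Real.sq_sqrt hD.le
    have hM : 0 < 1 - 2*lam^2*B := by nlinarith
    have hsDM : sD < 1 - 2*lam^2*B := by
      nlinarith [pow_pos (mul_pos (pow_pos hlam0 2) hB) 2]
    have hden : 0 < 2*lam^2*B^2 := by positivity
    set a : ℝ := ((1 - 2*lam^2*B) - sD)/(2*lam^2*B^2) with hadef
    set b : ℝ := ((1 - 2*lam^2*B) + sD)/(2*lam^2*B^2) with hbdef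
    have ha : 0 < a := div_pos (by linarith) hden
    have hab : a < b := by
      rw [hadef, hbdef, div_lt_div_iff_of_pos_right hden]; linarith
    have hsum : lam^2*B^2*(a+b) = 1 - 2*lam^2*B := by
      rw [hadef, hbdef]; field_simp; ring
    have hprod : a*b = c^2 := by
      rw [hadef, hbdef, div_mul_div_comm, div_eq_iff (by positivity)]
      linear_combination (-1:ℝ)*hsD2 + (-(4*lam^4*B^2*(B*c+1)))*hBc
    clear_value sD a b
    have hiden : ∀ r : ℝ, r - lam^2*(1+B*r)^2 = lam^2*B^2*((r-a)*(b-r)) := by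
      intro r
      have h2 : lam^2*B^2*(a*b) = lam^2 := by
        rw [hprod]; linear_combination (lam^2*(B*c+1))*hBc
      linear_combination h2 - r*hsum
    have hpt : ∀ r ∈ Icc a b, (max (1 / (r * (1 + B * r) ^ 2) - lam ^ 2 / r ^ 2) 0) ^ ((1:ℝ)/2)
        = (lam*B) * (Real.sqrt ((r-a)*(b-r)) * (1/r - 1/(r+c))) := by
      intro r hr
      have hr0 : 0 < r := ha.trans_le hr.1
      have h1Br : 0 < 1 + B*r := by positivity
      have hW : 0 ≤ (r-a)*(b-r) := mul_nonneg (by linarith [hr.1]) (by linarith [hr.2])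
      have hY2 : (lam*B*Real.sqrt ((r-a)*(b-r))/(r*(1+B*r)))^2
          = (r - lam^2*(1+B*r)^2)/(r^2*(1+B*r)^2) := by
        rw [div_pow, mul_pow, mul_pow, Real.sq_sqrt hW, mul_pow]
        congr 1
        linear_combination (-1:ℝ) * hiden r
      have hXeq : 1/(r*(1+B*r)^2) - lam^2/r^2
          = (lam*B*Real.sqrt ((r-a)*(b-r))/(r*(1+B*r)))^2 := by
        rw [hY2]; field_simp
      rw [hXeq, max_eq_left (sq_nonneg _), ← Real.sqrt_eq_rpow, Real.sqrt_sq (by positivity)]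
      have hcr : 1 + B*r = B*(r+c) := by linear_combination -hBc
      rw [hcr]
      field_simp
      linear_combination (-(Real.sqrt ((r-a)*(b-r)))) * hBc
    have hzero : ∀ r ∈ Ioi (0:ℝ) \ Ioc a b,
        (max (1 / (r * (1 + B * r) ^ 2) - lam ^ 2 / r ^ 2) 0) ^ ((1:ℝ)/2) = 0 := by
      intro r hr
      obtain ⟨hr0, hrn⟩ := hr
      have hr0 : 0 < r := hr0
      have h1Br : 0 < 1 + B*r := by positivity
      have hWn : (r-a)*(b-r) ≤ 0 := by
        by_cases hra : r ≤ a
        · exact mul_nonpos_of_nonpos_of_nonneg (by linarith) (by linarith [hab])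
        · have hrb : b < r := by
            by_contra hrb
            push_neg at hrb
            exact hrn ⟨lt_of_not_ge hra, hrb⟩
          exact mul_nonpos_of_nonneg_of_nonpos (by linarith) (by linarith)
      have hle : 1/(r*(1+B*r)^2) - lam^2/r^2 ≤ 0 := by
        rw [sub_nonpos, div_le_div_iff₀ (by positivity) (by positivity)]
        have hkey : r ≤ lam^2*(1+B*r)^2 := by
          nlinarith [hiden r, mul_nonpos_of_nonneg_of_nonpos
            (by positivity : (0:ℝ) ≤ lam^2*B^2) hWn]
        nlinarith [mul_le_mul_of_nonneg_left hkey hr0.le]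
      rw [max_eq_right hle]
      exact Real.zero_rpow (by norm_num)
    have hsub : Ioc a b ⊆ Ioi (0:ℝ) := fun x hx => ha.trans hx.1
    rw [setIntegral_eq_of_subset_of_forall_diff_eq_zero measurableSet_Ioi hsub hzero,
      ← intervalIntegral.integral_of_le hab.le,
      intervalIntegral.integral_congr (g := fun r =>
        (lam*B) * (Real.sqrt ((r-a)*(b-r)) * (1/r - 1/(r+c))))
        (fun x hx => hpt x (by rwa [uIcc_of_le hab.le] at hx)),
      intervalIntegral.integral_const_mul, key_integral a b c ha hab hcpos]
    -- numeric endgame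
    have hsab : Real.sqrt (a*b) = c := by rw [hprod, Real.sqrt_sq hcpos.le]
    have h2' : lam^2*B^2*(a*b) = lam^2 := by
      rw [hprod]; linear_combination (lam^2*(B*c+1))*hBc
    have h3 : lam^2*B^2*((a+c)*(b+c)) = c := by
      linear_combination h2' + c*hsum + (lam^2*(B*c-1))*hBc
    have hApBp : (a+c)*(b+c) = (c*Real.sqrt c/lam)^2 := by
      rw [div_pow, mul_pow, Real.sq_sqrt hcpos.le, eq_div_iff (by positivity)]
      linear_combination c^2*h3 + (-(lam^2*((a+c)*(b+c))*(c*B+1)))*hBc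
    have hKval : Real.sqrt ((a+c)*(b+c)) = c*s13/lam := by
      rw [hApBp, Real.sqrt_sq (by positivity), hsqrtc]
    rw [hsab, hKval, max_eq_left (by linarith)]
    have hpi : (π:ℝ) ≠ 0 := Real.pi_ne_zero
    field_simp
    linear_combination (s13 - 2*lam)*hBc
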